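/- Let σ be a real symmetric positive definite 2×2 matrix. Define μ₁ = (−σ₁₁ + σ₂₂ − 2iσ₁₂)/(σ₁₁ + σ₂₂ + 2√(det σ)), μ₂ = (1 − √(det σ))/(1 + √(det σ)), ν₁ = μ₁(1 − μ₂²)/(1 − |μ₁|²μ₂²) and ν₂ = μ₂(1 − |μ₁|²)/(1 − |μ₁|²μ₂²). Then ν₁ = (σ₂₂ − σ₁₁ − 2iσ₁₂)/(1 + tr σ + det σ) and ν₂ = (1 − det σ)/(1 + tr σ + det σ). -/

import Mathlib

open Matrix

theorem nu_formulas (s11 s12 s22 : ℝ)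
    (hpd : (!![s11, s12; s12, s22] : Matrix (Fin 2) (Fin 2) ℝ).PosDef)
    (d t : ℝ) (hd : d = s11 * s22 - s12 ^ 2) (ht : t = s11 + s22)
    (μ1 : ℂ) (μ2 : ℝ)
    (hμ1 : μ1 = ((- s11 + s22 : ℝ) - 2 * (s12 : ℂ) * Complex.I) /
      ((t + 2 * Real.sqrt d : ℝ) : ℂ))
    (hμ2 : μ2 = (1 - Real.sqrt d) / (1 + Real.sqrt d))
    (ν1 : ℂ) (ν2 : ℝ)
    (hν1 : ν1 = μ1 * ((1 - μ2 ^ 2 : ℝ) / (1 - ‖μ1‖ ^ 2 * μ2 ^ 2) : ℝ))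
    (hν2 : ν2 = μ2 * (1 - ‖μ1‖ ^ 2) / (1 - ‖μ1‖ ^ 2 * μ2 ^ 2)) :
    ν1 = ((s22 - s11 : ℝ) - 2 * (s12 : ℂ) * Complex.I) / ((1 + t + d : ℝ) : ℂ) ∧
    ν2 = (1 - d) / (1 + t + d) := by
  have hdet : (0:ℝ) < d := by
    have := hpd.det_pos
    simp [Matrix.det_fin_two] at this
    rw [hd]; nlinarith
  have hs11 : 0 < s11 := by
    have := hpd.dotProduct_mulVec_pos (x := ![1, 0]) (by intro h; simpa using congrFun h 0)
    simpa [Matrix.mulVec, dotProduct, Fin.sum_univ_two] using this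
  have hs22 : 0 < s22 := by
    have := hpd.dotProduct_mulVec_pos (x := ![0, 1]) (by intro h; simpa using congrFun h 1)
    simpa [Matrix.mulVec, dotProduct, Fin.sum_univ_two] using this
  set r := Real.sqrt d with hrdef
  have hr0 : 0 < r := Real.sqrt_pos.mpr hdet
  have hr2 : r ^ 2 = d := Real.sq_sqrt hdet.le
  clear_value r
  have htpos : 0 < t := by rw [ht]; linarith
  have htr : 2 * r ≤ t := by
    nlinarith [sq_nonneg (s11 - s22), sq_nonneg (t - 2 * r)]
  have h1 : t + 2 * r ≠ 0 := by positivity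
  have h2 : (1:ℝ) + r ≠ 0 := by positivity
  have h3 : (1:ℝ) + t + d ≠ 0 := by positivity
  have hA : ‖μ1‖ ^ 2 = (t - 2 * r) / (t + 2 * r) := by
    rw [Complex.sq_norm, hμ1, Complex.normSq_div]
    simp [Complex.normSq_apply, Complex.mul_re, Complex.mul_im]
    rw [div_eq_div_iff (by positivity) h1]
    subst hd ht
    linear_combination (4 * (s11 + s22) + 8 * r) * hr2
  have h1m2 : (1:ℝ) - μ2 ^ 2 = 4 * r / (1 + r) ^ 2 := by
    rw [hμ2]; field_simp; ring
  have h1mA : (1:ℝ) - ‖μ1‖ ^ 2 = 4 * r / (t + 2 * r) := by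
    rw [hA]; field_simp; ring
  have hD : (1:ℝ) - ‖μ1‖ ^ 2 * μ2 ^ 2 =
      4 * r * (1 + t + d) / ((t + 2 * r) * (1 + r) ^ 2) := by
    rw [hA, hμ2, ← hr2]
    field_simp
    ring
  constructor
  · rw [hν1, h1m2, hD]
    have hs : (4 * r / (1 + r) ^ 2) / (4 * r * (1 + t + d) / ((t + 2 * r) * (1 + r) ^ 2))
        = (t + 2 * r) / (1 + t + d) := by
      field_simp
    rw [hs, hμ1]
    have h1c : ((t + 2 * r : ℝ) : ℂ) ≠ 0 := by exact_mod_cast h1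
    rw [Complex.ofReal_div, div_mul_div_comm,
      mul_comm ((((- s11 + s22 : ℝ) : ℂ)) - 2 * (s12 : ℂ) * Complex.I),
      mul_div_mul_left _ _ h1c]
    congr 1
    push_cast; ring
  · rw [hν2, h1mA, hD, hμ2, ← hr2]
    field_simp
    ring
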